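/- Let n ≥ 2, J ⊆ [n-1] and i ∈ [n-1]. Then: (1) v_J ∈ F_i^+ if and only if i ∈ J; and (2) v_J ∈ F_i^- if and only if i ∉ J, where F_i^+ := conv{v_L : L ⊆ [n-1], i ∈ L} and F_i^- := conv{v_L : L ⊆ [n-1], i ∉ L}. -/
import Mathlib


open Matrix

attribute [local instance] Classical.propDecidable

noncomputable section

namespace PetersonPaper

/-- The natural number `c` (0-based; encoding the 1-based element `c+1`) belongs to
`J ⊆ [n-1]`. -/
def memJ (n : ℕ) (J : Set (Fin (n-1))) (c : ℕ) : Prop :=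
  ∃ h : c < n - 1, (⟨c, h⟩ : Fin (n-1)) ∈ J

/-- The (0-based) first element of the maximal interval of consecutive integers of
`J` containing `i ∈ J`. -/
def compStart (n : ℕ) (J : Set (Fin (n-1))) (i : Fin (n-1)) : ℕ :=
  sInf {a : ℕ | a ≤ i.1 ∧ ∀ c : ℕ, a ≤ c → c ≤ i.1 → memJ n J c}

/-- The (0-based) last element of the maximal interval of consecutive integers of
`J` containing `i ∈ J`. -/
def compEnd (n : ℕ) (J : Set (Fin (n-1))) (i : Fin (n-1)) : ℕ :=
  sSup {b : ℕ | b < n - 1 ∧ i.1 ≤ b ∧ ∀ c : ℕ, i.1 ≤ c → c ≤ b → memJ n J c}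

/-- The vertex `v_J ∈ ℝ^{n-1}`: its `i`-th coordinate is `(i+1-a)(b+1-i)` (1-based)
if `i ∈ J` with `[a,b]` the maximal interval of `J` containing `i`, and `0`
otherwise. -/
def vJ (n : ℕ) (J : Set (Fin (n-1))) : Fin (n-1) → ℝ :=
  fun i => if i ∈ J then
    (((i.1 + 1 - compStart n J i) * (compEnd n J i + 1 - i.1) : ℕ) : ℝ) else 0

/-- The standard inner product on `ℝ^{n-1}`. -/
def dotR (n : ℕ) (a b : Fin (n-1) → ℝ) : ℝ := ∑ i, a i * b i

/-- The standard basis vector `e_i` of `ℝ^{n-1}`. -/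
def stdE (n : ℕ) (i : Fin (n-1)) : Fin (n-1) → ℝ := fun j => if j = i then 1 else 0

/-- `-α^∨_i = e_{i-1} - 2 e_i + e_{i+1}` with the convention `e_0 = e_n = 0`
(1-based; `i : Fin (n-1)` encodes `i.1+1`). -/
def negAlphaV (n : ℕ) (i : Fin (n-1)) : Fin (n-1) → ℝ :=
  fun j => (if j.1 + 1 = i.1 then 1 else 0) - 2 * (if j = i then 1 else 0)
    + (if j.1 = i.1 + 1 then 1 else 0)

/-- The face `F_i^+ = conv{v_J : i ∈ J}`. -/
def Fplus (n : ℕ) (i : Fin (n-1)) : Set (Fin (n-1) → ℝ) :=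
  convexHull ℝ { v | ∃ J : Set (Fin (n-1)), i ∈ J ∧ v = vJ n J }

/-- The face `F_i^- = conv{v_J : i ∉ J}`. -/
def Fminus (n : ℕ) (i : Fin (n-1)) : Set (Fin (n-1) → ℝ) :=
  convexHull ℝ { v | ∃ J : Set (Fin (n-1)), i ∉ J ∧ v = vJ n J }

/-- The polytope `P_{n-1} = conv{v_J : J ⊆ [n-1]}`. -/
def Ppoly (n : ℕ) : Set (Fin (n-1) → ℝ) :=
  convexHull ℝ { v | ∃ J : Set (Fin (n-1)), v = vJ n J }

/-- The face `F_{K,J} = (⋂_{i ∈ K} F_i^+) ∩ (⋂_{i ∉ J} F_i^-)` of `P_{n-1}`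
(intersecting with `P_{n-1}` itself, which encodes the convention
`F_{∅,[n-1]} = P_{n-1}` and is harmless otherwise, all faces being subsets of
`P_{n-1}`). -/
def FKJ (n : ℕ) (K J : Set (Fin (n-1))) : Set (Fin (n-1) → ℝ) :=
  Ppoly n ∩ (⋂ i ∈ K, Fplus n i) ∩ (⋂ i ∈ (Jᶜ : Set (Fin (n-1))), Fminus n i)

lemma vJ_coord_zero (n : ℕ) (J : Set (Fin (n-1))) (i : Fin (n-1)) (h : i ∉ J) :
    vJ n J i = 0 := by simp [vJ, h]

lemma vJ_coord_one_le (n : ℕ) (J : Set (Fin (n-1))) (i : Fin (n-1)) (h : i ∈ J) :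
    1 ≤ vJ n J i := by
  have hmem : memJ n J i.1 := ⟨i.isLt, by simpa using h⟩
  have ha : compStart n J i ≤ i.1 := Nat.sInf_le ⟨le_refl _, fun c hc hc' => by
    have hci : c = i.1 := le_antisymm hc' hc
    subst hci; exact hmem⟩
  have hb : i.1 ≤ compEnd n J i := le_csSup ⟨n-1, fun b hb => le_of_lt hb.1⟩
    ⟨i.isLt, le_refl _, fun c hc hc' => by
      have hci : c = i.1 := le_antisymm hc' hc
      subst hci; exact hmem⟩
  rw [vJ]
  simp only [h, if_true]
  have h12 : 1 * 1 ≤ (i.1 + 1 - compStart n J i) * (compEnd n J i + 1 - i.1) :=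
    Nat.mul_le_mul (by omega) (by omega)
  rw [one_mul] at h12
  exact_mod_cast h12

/-- Lemma: `v_J ∈ F_i^+` iff `i ∈ J`, and `v_J ∈ F_i^-` iff `i ∉ J`. -/
theorem vJ_mem_face_iff (n : ℕ) (hn : 2 ≤ n) (J : Set (Fin (n-1))) (i : Fin (n-1)) :
    (vJ n J ∈ Fplus n i ↔ i ∈ J) ∧ (vJ n J ∈ Fminus n i ↔ i ∉ J) := by
  have hlin : IsLinearMap ℝ (fun x : Fin (n-1) → ℝ => x i) :=
    (LinearMap.proj i : (Fin (n-1) → ℝ) →ₗ[ℝ] ℝ).isLinear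
  constructor
  · constructor
    · intro hmem
      by_contra hi
      have hsub : Fplus n i ⊆ {x | 1 ≤ x i} :=
        convexHull_min (by rintro v ⟨L, hL, rfl⟩; exact vJ_coord_one_le n L i hL)
          (convex_halfSpace_ge hlin 1)
      have h1 := hsub hmem
      rw [Set.mem_setOf_eq, vJ_coord_zero n J i hi] at h1
      linarith
    · intro hi; exact subset_convexHull ℝ _ ⟨J, hi, rfl⟩
  · constructor
    · intro hmem hi
      have hsub : Fminus n i ⊆ {x | x i ≤ 0} :=
        convexHull_min (by rintro v ⟨L, hL, rfl⟩; rw [Set.mem_setOf_eq,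
          vJ_coord_zero n L i hL]) (convex_halfSpace_le hlin 0)
      have h0 := hsub hmem
      have h1 := vJ_coord_one_le n J i hi
      simp only [Set.mem_setOf_eq] at h0
      linarith
    · intro hi; exact subset_convexHull ℝ _ ⟨J, hi, rfl⟩

end PetersonPaper
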